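/- Suppose κ is an uncountable cardinal that is not L_{ω₁ω}-compact (no κ-complete filter extension property). Then κ ∉ WS: there exists a nonempty system S of homogeneous ℤ-linear equations such that every nonempty subsystem of cardinality < κ has a weakly nontrivial solution in ℤ, but S has none. -/

import Mathlib

lemma exists_val2 (a : ℤ) (ha : a ≠ 0) : ∃ v : ℕ, ¬ (2:ℤ)^(v+1) ∣ a ∧ (2:ℤ)^v ∣ a := by
  have hbd : ∃ v : ℕ, ¬ (2:ℤ)^(v+1) ∣ a := by
    refine ⟨a.natAbs, fun hdvd => ?_⟩
    have h1 : (2:ℤ)^(a.natAbs+1) ≤ |a| := Int.le_of_dvd (abs_pos.mpr ha) ((dvd_abs _ _).mpr hdvd)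
    have h2 : |a| = (a.natAbs : ℤ) := Int.abs_eq_natAbs a
    have h3 : (a.natAbs : ℤ) < 2^(a.natAbs+1) := by
      have := Nat.lt_two_pow_self (n := a.natAbs)
      have h4 : (a.natAbs : ℤ) < 2^a.natAbs := by exact_mod_cast this
      have : (2:ℤ)^a.natAbs ≤ 2^(a.natAbs+1) := by
        apply pow_le_pow_right₀ <;> norm_num
      linarith
    rw [h2] at h1; linarith
  classical
  refine ⟨Nat.find hbd, Nat.find_spec hbd, ?_⟩
  rcases Nat.eq_zero_or_pos (Nat.find hbd) with h | h
  · simp [h]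
  · have h2 := Nat.find_min hbd (show Nat.find hbd - 1 < Nat.find hbd by omega)
    push_neg at h2
    have h5 : Nat.find hbd - 1 + 1 = Nat.find hbd := by omega
    rwa [h5] at h2

lemma core (a : ℕ → ℤ) (ha : ∀ n, a n ≠ 0) :
    ∃ δ : ℕ → ℤ, ∀ m : ℤ, ∃ N : ℕ,
      ¬ (2:ℤ)^N ∣ m - ∑ n ∈ Finset.range N, δ n * 2^n * a n := by
  classical
  choose v hv1 _ using fun n => exists_val2 (a n) (ha n)
  have key : ∀ N : ℕ, ¬ (2:ℤ)^(N + v N + 1) ∣ 2^N * a N := by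
    intro N hdvd
    apply hv1 N
    have h2 : ((2:ℤ)^N * 2^(v N + 1)) ∣ 2^N * a N := by
      rw [← pow_add, ← add_assoc]; exact hdvd
    exact (mul_dvd_mul_iff_left (by positivity : (2:ℤ)^N ≠ 0)).mp h2
  have pick : ∀ (N : ℕ) (Sm : ℤ), ∃ c : ℤ, ¬ (2:ℤ)^(N + v N + 1) ∣ Sm - c * (2^N * a N) := by
    intro N Sm
    by_cases h : (2:ℤ)^(N + v N + 1) ∣ Sm - 2^N * a N
    · refine ⟨0, fun h0 => key N ?_⟩
      have h3 := dvd_sub (by simpa using h0 : (2:ℤ)^(N + v N + 1) ∣ Sm) h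
      rw [sub_sub_cancel] at h3
      exact h3
    · exact ⟨1, by simpa using h⟩
  choose bit hbit using pick
  let e : ℕ → ℤ := fun k => Denumerable.ofNat ℤ k
  let st : ℕ → ℕ × ℤ := fun k => Nat.rec (0, 0)
    (fun k ih => (ih.1 + v ih.1 + 1, ih.2 + bit ih.1 (e k - ih.2) * (2^ih.1 * a ih.1))) k
  have hstsucc : ∀ k, st (k+1) =
      ((st k).1 + v (st k).1 + 1, (st k).2 + bit (st k).1 (e k - (st k).2) * (2^(st k).1 * a (st k).1)) := by
    intro k; rfl
  have hmono : StrictMono (fun k => (st k).1) := by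
    apply strictMono_nat_of_lt_succ
    intro k; rw [hstsucc]; omega
  let δ : ℕ → ℤ := fun n =>
    if h : ∃ k, (st k).1 = n then bit n (e h.choose - (st h.choose).2) else 0
  have hδat : ∀ k, δ ((st k).1) = bit (st k).1 (e k - (st k).2) := by
    intro k
    have hex : ∃ k', (st k').1 = (st k).1 := ⟨k, rfl⟩
    have : hex.choose = k := hmono.injective hex.choose_spec
    simp only [δ, dif_pos hex]
    rw [this]
  have hδ0 : ∀ n, (¬ ∃ k, (st k).1 = n) → δ n = 0 := by
    intro n hn; simp only [δ, dif_neg hn]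
  have hsum : ∀ k, (st k).2 = ∑ n ∈ Finset.range (st k).1, δ n * 2^n * a n := by
    intro k
    induction k with
    | zero => simp [st]
    | succ k ih =>
      rw [hstsucc]
      simp only
      have h1 : Finset.range ((st k).1 + v (st k).1 + 1)
          = Finset.range (st k).1 ∪ Finset.Ico (st k).1 ((st k).1 + v (st k).1 + 1) := by
        rw [Finset.range_eq_Ico, Finset.range_eq_Ico, Finset.Ico_union_Ico_eq_Ico (Nat.zero_le _) (by omega)]
      rw [h1, Finset.sum_union]
      · rw [← ih]
        congr 1
        rw [Finset.sum_eq_single_of_mem (st k).1 (by simp)]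
        · rw [hδat k]; ring
        · intro b hb hbne
          have : δ b = 0 := by
            apply hδ0
            rintro ⟨k', hk'⟩
            simp only [Finset.mem_Ico] at hb
            rcases lt_or_ge k' (k+1) with h | h
            · have : (st k').1 ≤ (st k).1 := by
                have := hmono.monotone (Nat.lt_succ_iff.mp h)
                exact this
              omega
            · have : (st (k+1)).1 ≤ (st k').1 := hmono.monotone h
              rw [hstsucc] at this
              omega
          simp [this]
      · rw [Finset.range_eq_Ico]
        apply Finset.Ico_disjoint_Ico_consecutive
  refine ⟨δ, fun m => ?_⟩
  set k := Encodable.encode m with hk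
  have hek : e k = m := by rw [hk]; exact Denumerable.ofNat_encode m
  refine ⟨(st (k+1)).1, ?_⟩
  rw [← hsum (k+1), hstsucc]
  simp only
  have := hbit (st k).1 (m - (st k).2)
  rw [hek]
  convert this using 2
  ring

lemma spk1 (ψ : (ℕ → ℤ) →+ ℤ) (h : ∀ n, ψ (Pi.single n 1) ≠ 0) : False := by
  classical
  obtain ⟨δ, hδ⟩ := core (fun n => ψ (Pi.single n 1)) h
  set x : ℕ → ℤ := fun n => δ n * 2^n with hxdef
  have key : ∀ N, (2:ℤ)^N ∣ ψ x - ∑ n ∈ Finset.range N, δ n * 2^n * ψ (Pi.single n 1) := by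
    intro N
    have hx : x = (∑ n ∈ Finset.range N, (δ n * 2^n) • Pi.single n (1:ℤ))
        + (2:ℤ)^N • (fun m => if N ≤ m then δ m * 2^(m - N) else 0) := by
      funext m
      simp only [Pi.add_apply, Finset.sum_apply, Pi.smul_apply, Pi.single_apply,
        smul_eq_mul, mul_ite, mul_one, mul_zero]
      rw [Finset.sum_ite_eq (Finset.range N) m (fun n => δ n * 2^n)]
      by_cases hm : m < N
      · simp [hxdef, Finset.mem_range.mpr hm, Nat.not_le.mpr hm]
      · push_neg at hm
        have : (2:ℤ)^N * (δ m * 2^(m-N)) = δ m * 2^m := by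
          rw [← mul_assoc, mul_comm ((2:ℤ)^N), mul_assoc, ← pow_add, Nat.add_sub_cancel' hm]
        simp only [hxdef, Finset.mem_range, if_neg (by omega : ¬ m < N), if_pos hm]
        rw [this]
        ring
    have : ψ x = (∑ n ∈ Finset.range N, (δ n * 2^n) * ψ (Pi.single n 1))
        + (2:ℤ)^N * ψ (fun m => if N ≤ m then δ m * 2^(m - N) else 0) := by
      rw [hx, map_add, map_sum]
      simp only [map_zsmul, smul_eq_mul]
    rw [this]
    exact ⟨ψ (fun m => if N ≤ m then δ m * 2^(m - N) else 0), by ring⟩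
  obtain ⟨N, hN⟩ := hδ (ψ x)
  exact hN (key N)

lemma fin_supp_zero (ψ : (ℕ → ℤ) →+ ℤ) (h : ∀ n, ψ (Pi.single n 1) = 0)
    (w : ℕ → ℤ) (n : ℕ) (hw : ∀ m, n ≤ m → w m = 0) : ψ w = 0 := by
  classical
  have hweq : w = ∑ i ∈ Finset.range n, w i • Pi.single i (1:ℤ) := by
    funext m
    simp only [Finset.sum_apply, Pi.smul_apply, Pi.single_apply, smul_eq_mul,
      mul_ite, mul_one, mul_zero]
    rw [Finset.sum_ite_eq (Finset.range n) m w]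
    by_cases hm : m < n
    · simp [Finset.mem_range.mpr hm]
    · push_neg at hm
      simp [hw m hm, Finset.mem_range, Nat.not_lt.mpr hm]
  rw [hweq, map_sum]
  refine Finset.sum_eq_zero (fun i _ => ?_)
  rw [map_zsmul, h, smul_zero]

lemma spk2 (ψ : (ℕ → ℤ) →+ ℤ) (h : ∀ n, ψ (Pi.single n 1) = 0) : ψ 1 = 0 := by
  classical
  by_contra ha
  obtain ⟨δ, hδ⟩ := core (fun _ => ψ 1) (fun _ => ha)
  set z : ℕ → ℤ := fun m => ∑ n ∈ Finset.range (m+1), δ n * 2^n with hzdef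
  have hstep : ∀ n : ℕ, ψ (fun m => if n ≤ m then (1:ℤ) else 0) = ψ 1 := by
    intro n
    have hd : (1 : ℕ → ℤ) = (fun m => if n ≤ m then (1:ℤ) else 0)
        + (fun m => if n ≤ m then (0:ℤ) else 1) := by
      funext m; by_cases hm : n ≤ m <;> simp [hm]
    have h0 : ψ (fun m => if n ≤ m then (0:ℤ) else 1) = 0 := by
      apply fin_supp_zero ψ h _ n
      intro m hm; simp [hm]
    calc ψ (fun m => if n ≤ m then (1:ℤ) else 0)
        = ψ ((fun m => if n ≤ m then (1:ℤ) else 0) + (fun m => if n ≤ m then (0:ℤ) else 1)) := by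
          rw [map_add, h0, add_zero]
      _ = ψ 1 := by rw [← hd]
  have key : ∀ N, (2:ℤ)^N ∣ ψ z - ∑ n ∈ Finset.range N, δ n * 2^n * ψ 1 := by
    intro N
    have hz : z = (∑ n ∈ Finset.range N, (δ n * 2^n) • (fun m => if n ≤ m then (1:ℤ) else 0))
        + (2:ℤ)^N • (fun m => if N ≤ m then ∑ n ∈ Finset.Ico N (m+1), δ n * 2^(n-N) else 0) := by
      funext m
      simp only [hzdef, Pi.add_apply, Finset.sum_apply, Pi.smul_apply, smul_eq_mul,
        mul_ite, mul_one, mul_zero]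
      have h1 : (∑ x ∈ Finset.range N, if x ≤ m then δ x * 2^x else 0)
          = ∑ x ∈ Finset.range (min N (m+1)), δ x * 2^x := by
        simp only [← Finset.mem_range_succ_iff]
        rw [Finset.sum_ite_mem]
        congr 1
        ext t
        simp only [Finset.mem_inter, Finset.mem_range, Finset.mem_range]
        omega
      rw [h1]
      by_cases hm : m + 1 ≤ N
      · rw [min_eq_right hm, if_neg (by omega : ¬ N ≤ m), add_zero]
      · push_neg at hm
        have hNm : N ≤ m := by omega
        rw [min_eq_left (by omega), if_pos hNm]
        have h2 : (2:ℤ)^N * ∑ n ∈ Finset.Ico N (m+1), δ n * 2^(n-N)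
            = ∑ n ∈ Finset.Ico N (m+1), δ n * 2^n := by
          rw [Finset.mul_sum]
          refine Finset.sum_congr rfl (fun n hn => ?_)
          simp only [Finset.mem_Ico] at hn
          rw [← mul_assoc, mul_comm ((2:ℤ)^N), mul_assoc, ← pow_add, Nat.add_sub_cancel' hn.1]
        rw [h2, Finset.range_eq_Ico, Finset.range_eq_Ico,
          Finset.sum_Ico_consecutive _ (Nat.zero_le N) (by omega : N ≤ m + 1)]
    have hψz : ψ z = (∑ n ∈ Finset.range N, (δ n * 2^n) * ψ 1)
        + (2:ℤ)^N * ψ (fun m => if N ≤ m then ∑ n ∈ Finset.Ico N (m+1), δ n * 2^(n-N) else 0) := by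
      rw [hz, map_add, map_sum]
      simp only [map_zsmul, smul_eq_mul, hstep]
    rw [hψz]
    exact ⟨ψ (fun m => if N ≤ m then ∑ n ∈ Finset.Ico N (m+1), δ n * 2^(n-N) else 0), by ring⟩
  obtain ⟨N, hN⟩ := hδ (ψ z)
  exact hN (key N)

universe u

open scoped Classical in
lemma psi_exists {I : Type u} (φ : (I → ℤ) →+ ℤ) (g₀ : I → ℤ) (C : ℕ → Set I)
    (hd : ∀ m n, m ≠ n → C m ∩ C n = ∅) :
    ∃ ψ : (ℕ → ℤ) →+ ℤ,
      (∀ n, ψ (Pi.single n 1) = φ (fun i => if i ∈ C n then g₀ i else 0)) ∧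
      ψ 1 = φ (fun i => if i ∈ ⋃ n, C n then g₀ i else 0) := by
  classical
  refine ⟨AddMonoidHom.mk' (fun c => φ (fun i =>
      if h : ∃ n, i ∈ C n then c (Nat.find h) * g₀ i else 0)) ?_, ?_, ?_⟩
  · intro c d
    rw [← map_add]
    congr 1
    funext i
    by_cases h : ∃ n, i ∈ C n
    · simp only [dif_pos h, Pi.add_apply, add_mul]
    · simp only [dif_neg h, Pi.add_apply, add_zero]
  · intro n
    simp only [AddMonoidHom.mk'_apply]
    congr 1
    funext i
    by_cases h : ∃ n, i ∈ C n
    · rw [dif_pos h, Pi.single_apply]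
      by_cases hC : i ∈ C n
      · have hfind : Nat.find h = n := by
          by_contra hne
          have h1 := Nat.find_spec h
          have := hd _ _ hne
          have : i ∈ C (Nat.find h) ∩ C n := ⟨h1, hC⟩
          rw [hd _ _ hne] at this
          exact this
        simp [hfind, hC]
      · have hfind : Nat.find h ≠ n := fun he => hC (he ▸ Nat.find_spec h)
        simp [hfind, hC]
    · have : i ∉ C n := fun hC => h ⟨n, hC⟩
      rw [dif_neg h, if_neg this]
  · simp only [AddMonoidHom.mk'_apply]
    congr 1
    funext i
    by_cases h : ∃ n, i ∈ C n
    · rw [dif_pos h, if_pos (Set.mem_iUnion.mpr h), Pi.one_apply, one_mul]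
    · rw [dif_neg h, if_neg (fun hu => h (Set.mem_iUnion.mp hu))]

lemma exists_cc_ultrafilter {I : Type u} (F : Filter I) (φ : (I → ℤ) →+ ℤ)
    (hφ0 : ∀ g : I → ℤ, {i | g i = 0} ∈ F → φ g = 0)
    (g₀ : I → ℤ) (hg₀ : φ g₀ ≠ 0) :
    ∃ U : Ultrafilter I, (∀ t ∈ F, t ∈ U) ∧
      ∀ s : Set (Set I), s.Countable → (∀ t ∈ s, t ∈ U) → ⋂₀ s ∈ U := by
  classical
  set ν : Set I → ℤ := fun A => φ (fun i => if i ∈ A then g₀ i else 0) with hν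
  set Z : Set (Set I) := {A | ∀ B, B ⊆ A → ν B = 0} with hZ
  have hmono : ∀ {A A' : Set I}, A' ⊆ A → A ∈ Z → A' ∈ Z :=
    fun h hA B hB => hA B (hB.trans h)
  -- countable unions
  have hcup : ∀ (C : ℕ → Set I), (∀ n, C n ∈ Z) → ∀ B ⊆ (⋃ n, C n), ν B = 0 := by
    intro C hC B hB
    set D : ℕ → Set I := fun n => (B ∩ C n) \ (⋃ m, ⋃ _ : m < n, C m) with hD
    have hdisj' : ∀ m n, m < n → D m ∩ D n = ∅ := by
      intro m n hmn
      ext i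
      simp only [Set.mem_inter_iff, Set.mem_empty_iff_false, iff_false, not_and]
      intro h1 h2
      exact h2.2 (Set.mem_iUnion.mpr ⟨m, Set.mem_iUnion.mpr ⟨hmn, h1.1.2⟩⟩)
    have hdisj : ∀ m n, m ≠ n → D m ∩ D n = ∅ := by
      intro m n hne
      rcases lt_or_gt_of_ne hne with h | h
      · exact hdisj' m n h
      · rw [Set.inter_comm]; exact hdisj' n m h
    have hBD : B = ⋃ n, D n := by
      ext i
      constructor
      · intro hi
        have hex : ∃ n, i ∈ C n := Set.mem_iUnion.mp (hB hi)
        refine Set.mem_iUnion.mpr ⟨Nat.find hex, ⟨⟨hi, Nat.find_spec hex⟩, ?_⟩⟩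
        intro hbad
        rcases Set.mem_iUnion.mp hbad with ⟨m, hm⟩
        rcases Set.mem_iUnion.mp hm with ⟨hmlt, hiCm⟩
        exact Nat.find_min hex hmlt hiCm
      · intro hi
        rcases Set.mem_iUnion.mp hi with ⟨n, hn⟩
        exact hn.1.1
    obtain ⟨ψ, hψ1, hψ2⟩ := psi_exists φ g₀ D hdisj
    have hz : ∀ n, ψ (Pi.single n 1) = 0 := by
      intro n
      rw [hψ1]
      exact hC n (D n) (fun i hi => hi.1.2)
    have h1 := spk2 ψ hz
    rw [hψ2, ← hBD] at h1
    exact h1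
  have hz_empty : (∅ : Set I) ∈ Z := by
    intro B hB
    rw [Set.subset_empty_iff.mp hB]
    show φ _ = 0
    convert map_zero φ using 2
    funext i
    simp
  have hz_union : ∀ {X Y : Set I}, X ∈ Z → Y ∈ Z → X ∪ Y ∈ Z := by
    intro X Y hX hY B hB
    refine hcup (fun n => if n = 0 then X else Y) (fun n => by by_cases h : n = 0 <;> simp [h, hX, hY]) B ?_
    intro i hi
    rcases hB hi with h | h
    · exact Set.mem_iUnion.mpr ⟨0, by simpa using h⟩
    · exact Set.mem_iUnion.mpr ⟨1, by simpa using h⟩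
  have hZuniv : (Set.univ : Set I) ∉ Z := by
    intro h
    apply hg₀
    have := h Set.univ subset_rfl
    simpa [hν] using this
  -- atom
  have hatom : ∃ A, A ∉ Z ∧ ∀ B ⊆ A, B ∈ Z ∨ A \ B ∈ Z := by
    by_contra hno
    push_neg at hno
    choose! ch hsub hch1 hch2 using hno
    set Aseq : ℕ → Set I := fun n => Nat.rec Set.univ (fun _ ih => ch ih) n with hA
    have hAsucc : ∀ n, Aseq (n+1) = ch (Aseq n) := fun n => rfl
    have hAnot : ∀ n, Aseq n ∉ Z := by
      intro n
      induction n with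
      | zero => exact hZuniv
      | succ n ih => rw [hAsucc]; exact hch1 _ ih
    have hsub' : ∀ n, Aseq (n+1) ⊆ Aseq n := fun n => by
      rw [hAsucc]; exact hsub _ (hAnot n)
    have hdn : ∀ n, Aseq n \ Aseq (n+1) ∉ Z := fun n => by
      rw [hAsucc]; exact hch2 _ (hAnot n)
    have hpick : ∀ n, ∃ E, E ⊆ Aseq n \ Aseq (n+1) ∧ ν E ≠ 0 := by
      intro n
      have := hdn n
      simp only [hZ, Set.mem_setOf_eq, not_forall] at this
      rcases this with ⟨E, hE1, hE2⟩
      exact ⟨E, hE1, hE2⟩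
    choose E hEsub hEν using hpick
    have hmon' : ∀ m n, m ≤ n → Aseq n ⊆ Aseq m := by
      intro m n h
      induction n with
      | zero => rw [Nat.le_zero.mp h]
      | succ n ih =>
        rcases Nat.lt_or_ge m (n+1) with h' | h'
        · exact (hsub' n).trans (ih (by omega))
        · rw [Nat.le_antisymm h h']
    have hdisj : ∀ m n, m ≠ n → E m ∩ E n = ∅ := by
      have key : ∀ m n, m < n → E m ∩ E n = ∅ := by
        intro m n hmn
        ext i
        simp only [Set.mem_inter_iff, Set.mem_empty_iff_false, iff_false, not_and]
        intro h1 h2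
        have hi1 : i ∉ Aseq (m+1) := (hEsub m h1).2
        have hi2 : i ∈ Aseq n := (hEsub n h2).1
        exact hi1 (hmon' (m+1) n hmn hi2)
      intro m n hne
      rcases lt_or_gt_of_ne hne with h | h
      · exact key m n h
      · rw [Set.inter_comm]; exact key n m h
    obtain ⟨ψ, hψ1, _⟩ := psi_exists φ g₀ E hdisj
    exact spk1 ψ (fun n => by rw [hψ1]; exact hEν n)
  obtain ⟨A₀, hA₀, hA₀atom⟩ := hatom
  -- the filter
  let G : Filter I :=
    { sets := {C | A₀ \ C ∈ Z}
      univ_sets := by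
        have : A₀ \ Set.univ = ∅ := Set.diff_univ A₀
        simp only [Set.mem_setOf_eq, this]
        exact hz_empty
      sets_of_superset := by
        intro C C' hC hCC'
        exact hmono (Set.diff_subset_diff_right hCC') hC
      inter_sets := by
        intro C C' hC hC'
        refine hmono ?_ (hz_union hC hC')
        intro i hi
        simp only [Set.mem_diff, Set.mem_inter_iff, not_and] at hi
        by_cases h : i ∈ C
        · exact Or.inr ⟨hi.1, hi.2 h⟩
        · exact Or.inl ⟨hi.1, h⟩ }
  have hmemG : ∀ {C : Set I}, C ∈ G ↔ A₀ \ C ∈ Z := Iff.rfl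
  have hcompl : ∀ s : Set I, sᶜ ∉ G ↔ s ∈ G := by
    intro s
    constructor
    · intro h
      rcases hA₀atom (A₀ ∩ s) Set.inter_subset_left with h' | h'
      · exfalso
        apply h
        rw [hmemG]
        refine hmono ?_ h'
        intro i hi
        exact ⟨hi.1, Set.notMem_compl_iff.mp hi.2⟩
      · rw [hmemG]
        refine hmono ?_ h'
        intro i hi
        exact ⟨hi.1, fun hc => hi.2 hc.2⟩
    · intro h hc
      apply hA₀
      have hsubu : A₀ ⊆ (A₀ \ s) ∪ (A₀ \ sᶜ) := by
        intro i hi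
        by_cases his : i ∈ s
        · exact Or.inr ⟨hi, fun hc => hc his⟩
        · exact Or.inl ⟨hi, his⟩
      exact hmono hsubu (hz_union h hc)
  refine ⟨Ultrafilter.ofComplNotMemIff G hcompl, ?_, ?_⟩
  · intro t ht
    show t ∈ G
    rw [hmemG]
    intro B hB
    apply hφ0
    refine Filter.mem_of_superset ht ?_
    intro i hit
    simp only [Set.mem_setOf_eq]
    rw [if_neg]
    intro hiB
    exact (hB hiB).2 hit
  · intro s hs hsU
    show ⋂₀ s ∈ G
    rcases Set.eq_empty_or_nonempty s with rfl | hne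
    · simp only [Set.sInter_empty]
      exact G.univ_sets
    obtain ⟨f, hf⟩ := hs.exists_eq_range hne
    rw [hmemG]
    intro B hB
    refine hcup (fun n => A₀ \ f n) (fun n => ?_) B ?_
    · have : f n ∈ s := by rw [hf]; exact ⟨n, rfl⟩
      exact hmemG.mp (hsU _ this)
    · intro i hi
      have hiA := (hB hi).1
      have hins := (hB hi).2
      simp only [Set.mem_sInter, not_forall] at hins
      rcases hins with ⟨t, hts, hit⟩
      rw [hf] at hts
      rcases hts with ⟨n, rfl⟩
      exact Set.mem_iUnion.mpr ⟨n, ⟨hiA, hit⟩⟩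

open scoped Classical in
lemma sum_eq_lin {A : Type u} [AddCommGroup A] (f : A → ℤ) (c₁ c₂ c₃ : A) :
    ((Finsupp.single c₁ (1:ℤ) + Finsupp.single c₂ 1 - Finsupp.single c₃ 1).sum
      fun x a => a * f x) = f c₁ + f c₂ - f c₃ := by
  have hL : ∀ g : A →₀ ℤ, (Finsupp.liftAddHom (fun x => AddMonoidHom.mulRight (f x))) g
      = g.sum fun x a => a * f x := fun g => rfl
  rw [← hL, map_sub, map_add]
  simp [Finsupp.liftAddHom_apply_single]

/-- If the uncountable cardinal `κ` is not `L_{ω₁ω}`-compact (some proper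
`κ`-complete filter admits no countably complete ultrafilter extension), then
`κ ∉ 𝒲𝒮`: there is a nonempty system of homogeneous `ℤ`-linear equations each of
whose nonempty subsystems of cardinality `< κ` has a weakly nontrivial solution in
`ℤ`, while the whole system has none. -/
theorem stmt16 {κ : Cardinal.{u}} (hκ : Cardinal.aleph0 < κ)
    (hnc : ¬ ∀ (I : Type u) (F : Filter I), F.NeBot →
      (∀ s : Set (Set I), Cardinal.mk s < κ → (∀ t ∈ s, t ∈ F) → ⋂₀ s ∈ F) →
      ∃ U : Ultrafilter I, (∀ t ∈ F, t ∈ U) ∧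
        ∀ s : Set (Set I), s.Countable → (∀ t ∈ s, t ∈ U) → ⋂₀ s ∈ U) :
    ∃ (J X : Type u) (k : J → (X →₀ ℤ)), Nonempty J ∧
      (∀ T : Set J, T.Nonempty → Cardinal.mk T < κ →
        ∃ f : X → ℤ, (∀ j ∈ T, ((k j).sum fun x a => a * f x) = 0) ∧
          ∃ x, (∃ j ∈ T, k j x ≠ 0) ∧ f x ≠ 0) ∧
      ¬ ∃ f : X → ℤ, (∀ j, ((k j).sum fun x a => a * f x) = 0) ∧
          ∃ x, (∃ j, k j x ≠ 0) ∧ f x ≠ 0 := by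
  classical
  push_neg at hnc
  obtain ⟨I, F, hne, hcomp, hF⟩ := hnc
  haveI := hne
  let K : AddSubgroup (I → ℤ) :=
    { carrier := {g | {i | g i = 0} ∈ F}
      zero_mem' := by
        have h : {i : I | (0 : I → ℤ) i = 0} = Set.univ := by ext i; simp
        show {i : I | (0 : I → ℤ) i = 0} ∈ F
        rw [h]; exact Filter.univ_mem
      add_mem' := by
        intro a b ha hb
        refine Filter.mem_of_superset (Filter.inter_mem ha hb) ?_
        intro i hi
        show (a + b) i = 0
        have h1 : a i = 0 := hi.1
        have h2 : b i = 0 := hi.2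
        simp [h1, h2]
      neg_mem' := by
        intro a ha
        refine Filter.mem_of_superset ha ?_
        intro i hi
        show (-a) i = 0
        simp only [Pi.neg_apply]
        rw [show a i = 0 from hi, neg_zero] }
  let A := (I → ℤ) ⧸ K
  let π : (I → ℤ) →+ A := QuotientAddGroup.mk' K
  have hπ0 : ∀ g : I → ℤ, π g = 0 ↔ {i | g i = 0} ∈ F :=
    fun g => QuotientAddGroup.eq_zero_iff g
  have hout : ∀ a : A, π a.out = a := fun a => QuotientAddGroup.out_eq' a
  have htf : ∀ a : A, a ≠ 0 → a + a ≠ 0 := by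
    intro a ha h
    apply ha
    have h1 : π (a.out + a.out) = 0 := by rw [map_add, hout]; exact h
    rw [hπ0] at h1
    have h2 : {i | (a.out + a.out) i = 0} = {i | a.out i = 0} := by
      ext i
      show a.out i + a.out i = 0 ↔ a.out i = 0
      omega
    rw [h2] at h1
    rw [← hout a]
    exact (hπ0 _).mpr h1
  have ha₁ : π (fun _ => (1:ℤ)) ≠ 0 := by
    intro hcon
    rw [hπ0] at hcon
    have h : {i : I | (fun _ => (1:ℤ)) i = 0} = ∅ := by ext i; simp
    rw [h] at hcon
    exact Filter.empty_notMem F hcon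
  set a₁ : A := π (fun _ => (1:ℤ)) with ha₁def
  let J := {p : A × A // p.1 ≠ 0 ∧ p.2 ≠ 0 ∧ p.1 + p.2 ≠ 0}
  let k : J → (A →₀ ℤ) := fun j =>
    Finsupp.single j.1.1 (1:ℤ) + Finsupp.single j.1.2 1 - Finsupp.single (j.1.1 + j.1.2) 1
  have hksum : ∀ (j : J) (f : A → ℤ),
      ((k j).sum fun x a => a * f x) = f j.1.1 + f j.1.2 - f (j.1.1 + j.1.2) :=
    fun j f => sum_eq_lin f _ _ _
  have hkcoe : ∀ (j : J) (x : A), (k j) x =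
      (if j.1.1 = x then (1:ℤ) else 0) + (if j.1.2 = x then 1 else 0)
        - (if j.1.1 + j.1.2 = x then 1 else 0) := by
    intro j x
    simp only [k, Finsupp.coe_sub, Finsupp.coe_add, Pi.sub_apply, Pi.add_apply,
      Finsupp.single_apply]
  refine ⟨J, A, k, ⟨⟨(a₁, a₁), ha₁, ha₁, htf a₁ ha₁⟩⟩, ?_, ?_⟩
  · -- small subsystems solvable
    intro T hTne hTcard
    obtain ⟨j₀, hj₀⟩ := hTne
    let sfam : J → Set I := fun j =>
      {i | (j.1.1.out) i + (j.1.2.out) i - ((j.1.1 + j.1.2).out) i = 0}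
    have hmemF : ∀ j : J, sfam j ∈ F := by
      intro j
      have h1 : π (j.1.1.out + j.1.2.out - (j.1.1 + j.1.2).out) = 0 := by
        rw [map_sub, map_add, hout, hout, hout, sub_self]
      rw [hπ0] at h1
      exact h1
    have hcard : Cardinal.mk (sfam '' T) < κ := lt_of_le_of_lt Cardinal.mk_image_le hTcard
    have hInt : ⋂₀ (sfam '' T) ∈ F :=
      hcomp _ hcard (by rintro t ⟨j, hj, rfl⟩; exact hmemF j)
    have hpick : ∃ i ∈ ⋂₀ (sfam '' T), (j₀.1.1.out) i ≠ 0 := by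
      by_contra hcon
      push_neg at hcon
      have h1 : {i | (j₀.1.1.out) i = 0} ∈ F := Filter.mem_of_superset hInt hcon
      have h2 : π j₀.1.1.out = 0 := (hπ0 _).mpr h1
      rw [hout] at h2
      exact j₀.2.1 h2
    obtain ⟨i, hiInt, hi0⟩ := hpick
    refine ⟨fun a => a.out i, ?_, j₀.1.1, ⟨j₀, hj₀, ?_⟩, hi0⟩
    · intro j hjT
      rw [hksum]
      exact hiInt _ ⟨j, hjT, rfl⟩
    · rw [hkcoe]
      rw [if_pos rfl]
      rw [if_neg (fun h : j₀.1.1 + j₀.1.2 = j₀.1.1 => j₀.2.2.1 (by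
        have := add_eq_left.mp h
        exact this))]
      by_cases hba : j₀.1.2 = j₀.1.1
      · rw [if_pos hba]; norm_num
      · rw [if_neg hba]; norm_num
  · -- whole system unsolvable
    rintro ⟨f, hsol, x₀, ⟨jw, hjw⟩, hfx₀⟩
    have heq : ∀ j : J, f j.1.1 + f j.1.2 - f (j.1.1 + j.1.2) = 0 := by
      intro j
      have := hsol j
      rwa [hksum] at this
    have hx₀ : x₀ ≠ 0 := by
      intro h0
      apply hjw
      rw [hkcoe, h0]
      rw [if_neg jw.2.1, if_neg jw.2.2.1, if_neg jw.2.2.2]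
      norm_num
    set f' : A → ℤ := fun a => if a = 0 then 0 else f a with hf'
    have hf'0 : f' 0 = 0 := by simp [hf']
    have hf'ne : ∀ a : A, a ≠ 0 → f' a = f a := by
      intro a ha; simp [hf', ha]
    have hf'add : ∀ a b : A, f' (a + b) = f' a + f' b := by
      intro a b
      by_cases ha : a = 0
      · subst ha; rw [zero_add, hf'0, zero_add]
      by_cases hb : b = 0
      · subst hb; rw [add_zero, hf'0, add_zero]
      by_cases hab : a + b = 0
      · have hb' : b = -a := eq_neg_of_add_eq_zero_right hab
        have h2a : a + a ≠ 0 := htf a ha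
        have e1 := heq ⟨(a, a), ha, ha, h2a⟩
        have hx : (a + a) + (-a) = a := by abel
        have e2 := heq ⟨(a + a, -a), h2a, neg_ne_zero.mpr ha, by rw [hx]; exact ha⟩
        simp only at e1 e2
        rw [hx] at e2
        rw [hab, hf'0, hf'ne a ha, hf'ne b hb, hb']
        have h3 : f (-a) = f a - f (a + a) := by linarith
        rw [h3]
        linarith
      · have e := heq ⟨(a, b), ha, hb, hab⟩
        simp only at e
        rw [hf'ne _ hab, hf'ne a ha, hf'ne b hb]
        linarith
    let φ : (I → ℤ) →+ ℤ := AddMonoidHom.mk' (fun g => f' (π g))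
      (fun g h => by rw [map_add, hf'add])
    have hφ0 : ∀ g : I → ℤ, {i | g i = 0} ∈ F → φ g = 0 := by
      intro g hg
      show f' (π g) = 0
      rw [(hπ0 g).mpr hg]
      exact hf'0
    have hφg : φ x₀.out ≠ 0 := by
      show f' (π x₀.out) ≠ 0
      rw [hout, hf'ne _ hx₀]
      exact hfx₀
    obtain ⟨U, hU1, hU2⟩ := exists_cc_ultrafilter F φ hφ0 _ hφg
    obtain ⟨s, hs1, hs2, hs3⟩ := hF U hU1
    exact hs3 (hU2 s hs1 hs2)
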